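/- For every real number y with y+n ≠ 0 for all natural numbers n (e.g. y > 0 or y not a nonpositive integer), and every real t with 0 ≤ t < 1, one has ∑_{n=0}^∞ (y+n)^{n} · (t·e^{-t})^n / n! = e^{y·t} / (1-t). -/

import Mathlib

set_option maxHeartbeats 1000000

open Finset Real


lemma fd : ∀ (N : ℕ) (m : ℕ), m ≤ N → ∀ (x : ℝ),
    ∑ n ∈ Finset.range (N+1), (-1:ℝ)^(N-n) * (N.choose n) * (x+n)^m
      = if m = N then (N.factorial : ℝ) else 0 := by
  intro N
  induction N with
  | zero =>
    intro m hm x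
    interval_cases m
    simp
  | succ N IH =>
    intro m hm x
    set S : ℝ := ∑ k ∈ Finset.range (N+1), (-1:ℝ)^(N-k) * (N.choose k) * (x+k)^m with hS
    set T : ℝ := ∑ j ∈ Finset.range (N+1), (-1:ℝ)^(N-j) * (N.choose (j+1)) * (x+(j+1:ℕ))^m with hT
    have hB' : ∑ k ∈ Finset.range (N+2), (-1:ℝ)^(N+1-k) * (N.choose k) * (x+k)^m = -S := by
      rw [Finset.sum_range_succ, Nat.choose_succ_self, hS, ← Finset.sum_neg_distrib]
      simp only [Nat.cast_zero, mul_zero, zero_mul, add_zero]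
      apply Finset.sum_congr rfl
      intro k hk
      rw [Finset.mem_range] at hk
      have h : N + 1 - k = (N - k) + 1 := by omega
      rw [h, pow_succ]
      ring
    have hB'2 : ∑ k ∈ Finset.range (N+2), (-1:ℝ)^(N+1-k) * (N.choose k) * (x+k)^m
        = T + (-1:ℝ)^(N+1) * x^m := by
      rw [Finset.sum_range_succ' (fun k => (-1:ℝ)^(N+1-k) * (N.choose k) * (x+k)^m), hT]
      congr 1
      · apply Finset.sum_congr rfl
        intro j hj
        have h : N + 1 - (j+1) = N - j := by omega
        rw [h]
      · simp
    have hT2 : T = -S - (-1:ℝ)^(N+1) * x^m := by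
      linarith [hB', hB'2]
    have key : ∑ n ∈ Finset.range (N+2), (-1:ℝ)^(N+1-n) * (((N+1).choose n) : ℝ) * (x+n)^m
        = ∑ j ∈ Finset.range (N+1), (-1:ℝ)^(N-j) * (N.choose j) *
            ((x+1+j)^m - (x+j)^m) := by
      rw [Finset.sum_range_succ' (fun n => (-1:ℝ)^(N+1-n) * (((N+1).choose n):ℝ) * (x+n)^m)]
      have expand : ∀ j ∈ Finset.range (N+1),
          (-1:ℝ)^(N+1-(j+1)) * (((N+1).choose (j+1)):ℝ) * (x+(j+1:ℕ))^m
          = (-1:ℝ)^(N-j) * (N.choose j) * (x+1+j)^m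
            + (-1:ℝ)^(N-j) * (N.choose (j+1)) * (x+(j+1:ℕ))^m := by
        intro j hj
        have h1 : N + 1 - (j+1) = N - j := by omega
        rw [h1, Nat.choose_succ_succ]
        have h2 : x + 1 + (j:ℝ) = x + ((j+1:ℕ):ℝ) := by push_cast; ring
        rw [h2]
        push_cast
        ring
      rw [Finset.sum_congr rfl expand, Finset.sum_add_distrib, ← hT, hT2]
      have h3 : ∑ j ∈ Finset.range (N+1), (-1:ℝ)^(N-j) * (N.choose j) *
            ((x+1+j)^m - (x+j)^m)
          = (∑ j ∈ Finset.range (N+1), (-1:ℝ)^(N-j) * (N.choose j) * (x+1+j)^m) - S := by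
        rw [hS, ← Finset.sum_sub_distrib]
        apply Finset.sum_congr rfl
        intro j hj; ring
      rw [h3]
      simp only [Nat.sub_zero, Nat.choose_zero_right, Nat.cast_one, Nat.cast_zero, add_zero,
        Nat.cast_ofNat, mul_one, one_mul]
      ring
    rw [key]
    have binom : ∀ (a : ℝ), (a+1)^m - a^m = ∑ i ∈ Finset.range m, (m.choose i : ℝ) * a^i := by
      intro a
      have h := add_pow a (1:ℝ) m
      simp only [one_pow, mul_one] at h
      rw [h, Finset.sum_range_succ]
      simp [mul_comm]
    have key2 : ∑ j ∈ Finset.range (N+1), (-1:ℝ)^(N-j) * (N.choose j) *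
            ((x+1+j)^m - (x+j)^m)
        = ∑ i ∈ Finset.range m, (m.choose i : ℝ) *
            ∑ j ∈ Finset.range (N+1), (-1:ℝ)^(N-j) * (N.choose j) * (x+j)^i := by
      have h4 : ∀ j ∈ Finset.range (N+1), (-1:ℝ)^(N-j) * (N.choose j) *
            ((x+1+j)^m - (x+j)^m)
          = ∑ i ∈ Finset.range m, (m.choose i : ℝ) *
              ((-1:ℝ)^(N-j) * (N.choose j) * (x+j)^i) := by
        intro j hj
        have h5 : x + 1 + (j:ℝ) = (x + j) + 1 := by ring
        rw [h5, binom, Finset.mul_sum]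
        apply Finset.sum_congr rfl
        intro i hi
        ring
      rw [Finset.sum_congr rfl h4, Finset.sum_comm]
      apply Finset.sum_congr rfl
      intro i hi
      rw [Finset.mul_sum]
    rw [key2]
    by_cases hmN : m = N + 1
    · subst hmN
      have h6 : ∀ i ∈ Finset.range (N+1),
          ((N+1).choose i : ℝ) * ∑ j ∈ Finset.range (N+1), (-1:ℝ)^(N-j) * (N.choose j) * (x+j)^i
          = if i = N then ((N+1).choose N : ℝ) * N.factorial else 0 := by
        intro i hi
        rw [Finset.mem_range] at hi
        rw [IH i (by omega) x]
        by_cases h : i = N <;> simp [h]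
      rw [Finset.sum_congr rfl h6, Finset.sum_ite_eq' (Finset.range (N+1)) N]
      simp [Nat.factorial_succ, Nat.choose_succ_self_right]
    · have h6 : ∀ i ∈ Finset.range m,
          (m.choose i : ℝ) * ∑ j ∈ Finset.range (N+1), (-1:ℝ)^(N-j) * (N.choose j) * (x+j)^i
          = 0 := by
        intro i hi
        rw [Finset.mem_range] at hi
        rw [IH i (by omega) x]
        have : i ≠ N := by omega
        simp [this]
      rw [Finset.sum_congr rfl h6]
      simp [hmN]

lemma cauchy_abel : ∀ (N : ℕ) (x y : ℝ),
    ∑ n ∈ Finset.range (N+1), (N.choose n : ℝ) * (x+n)^n * (y-n)^(N-n)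
      = ∑ j ∈ Finset.range (N+1), (N.choose j : ℝ) * (j.factorial) * (x+y)^(N-j) := by
  intro N
  induction N with
  | zero => intro x y; simp
  | succ N IH =>
    intro x
    set L : ℝ → ℝ := fun y => ∑ n ∈ Finset.range (N+2), ((N+1).choose n : ℝ) * (x+n)^n * (y-n)^(N+1-n) with hL
    set R : ℝ → ℝ := fun y => ∑ j ∈ Finset.range (N+2), ((N+1).choose j : ℝ) * (j.factorial) * (x+y)^(N+1-j) with hR
    suffices h : ∀ y, L y = R y by exact h
    -- derivative facts
    have hdL : ∀ y, HasDerivAt L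
        (∑ n ∈ Finset.range (N+2), ((N+1).choose n : ℝ) * (x+n)^n *
          ((N+1-n : ℕ) * (y-n)^(N+1-n-1))) y := by
      intro y
      apply HasDerivAt.fun_sum
      intro n hn
      have h1 : HasDerivAt (fun y : ℝ => y - (n:ℝ)) 1 y := (hasDerivAt_id y).sub_const _
      have h2 : HasDerivAt (fun y : ℝ => (y - (n:ℝ))^(N+1-n))
          ((N+1-n : ℕ) * (y-n)^(N+1-n-1) * 1) y := h1.pow _
      rw [mul_one] at h2
      exact h2.const_mul _
    have hdR : ∀ y, HasDerivAt R
        (∑ j ∈ Finset.range (N+2), ((N+1).choose j : ℝ) * (j.factorial) *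
          ((N+1-j : ℕ) * (x+y)^(N+1-j-1))) y := by
      intro y
      apply HasDerivAt.fun_sum
      intro j hj
      have h1 : HasDerivAt (fun y : ℝ => x + y) 1 y := (hasDerivAt_id y).const_add _
      have h2 : HasDerivAt (fun y : ℝ => (x+y)^(N+1-j))
          ((N+1-j : ℕ) * (x+y)^(N+1-j-1) * 1) y := h1.pow _
      rw [mul_one] at h2
      exact h2.const_mul _
    -- derivative values coincide by IH
    have hderiv_eq : ∀ y : ℝ,
        (∑ n ∈ Finset.range (N+2), ((N+1).choose n : ℝ) * (x+n)^n *
          ((N+1-n : ℕ) * (y-n)^(N+1-n-1)))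
        = (∑ j ∈ Finset.range (N+2), ((N+1).choose j : ℝ) * (j.factorial) *
          ((N+1-j : ℕ) * (x+y)^(N+1-j-1))) := by
      intro y
      have e1 : ∑ n ∈ Finset.range (N+2), ((N+1).choose n : ℝ) * (x+n)^n *
          ((N+1-n : ℕ) * (y-n)^(N+1-n-1))
          = (N+1 : ℝ) * ∑ n ∈ Finset.range (N+1), (N.choose n : ℝ) * (x+n)^n * (y-n)^(N-n) := by
        rw [Finset.sum_range_succ]
        simp only [Nat.sub_self, Nat.cast_zero, zero_mul, mul_zero, add_zero]
        rw [Finset.mul_sum]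
        apply Finset.sum_congr rfl
        intro n hn
        rw [Finset.mem_range] at hn
        have hc : ((N+1-n : ℕ) : ℝ) * ((N+1).choose n : ℝ) = (N+1 : ℝ) * (N.choose n : ℝ) := by
          have := Nat.choose_mul_succ_eq N n
          have h7 : (N.choose n * (N+1) : ℕ) = ((N+1).choose n * (N+1-n) : ℕ) := this
          have := congrArg (fun t : ℕ => (t : ℝ)) h7
          push_cast at this
          linarith
        have h8 : N + 1 - n - 1 = N - n := by omega
        rw [h8]
        linear_combination hc * ((x+n)^n * (y-n)^(N-n))
      have e2 : ∑ j ∈ Finset.range (N+2), ((N+1).choose j : ℝ) * (j.factorial) *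
          ((N+1-j : ℕ) * (x+y)^(N+1-j-1))
          = (N+1 : ℝ) * ∑ j ∈ Finset.range (N+1), (N.choose j : ℝ) * (j.factorial) * (x+y)^(N-j) := by
        rw [Finset.sum_range_succ]
        simp only [Nat.sub_self, Nat.cast_zero, zero_mul, mul_zero, add_zero]
        rw [Finset.mul_sum]
        apply Finset.sum_congr rfl
        intro j hj
        rw [Finset.mem_range] at hj
        have hc : ((N+1-j : ℕ) : ℝ) * ((N+1).choose j : ℝ) = (N+1 : ℝ) * (N.choose j : ℝ) := by
          have h7 : (N.choose j * (N+1) : ℕ) = ((N+1).choose j * (N+1-j) : ℕ) :=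
            Nat.choose_mul_succ_eq N j
          have := congrArg (fun t : ℕ => (t : ℝ)) h7
          push_cast at this
          linarith
        have h8 : N + 1 - j - 1 = N - j := by omega
        rw [h8]
        linear_combination hc * ((j.factorial : ℝ) * (x+y)^(N-j))
      rw [e1, e2, IH x y]
    -- L - R constant
    have hconst : ∀ y : ℝ, L y - R y = L (-x) - R (-x) := by
      intro y
      apply is_const_of_deriv_eq_zero (f := fun y => L y - R y)
      · intro z
        exact ((hdL z).sub (hdR z)).differentiableAt
      · intro z
        have := ((hdL z).fun_sub (hdR z)).deriv
        rw [this, hderiv_eq z, sub_self]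
    -- anchor
    have hanchor : L (-x) = R (-x) := by
      have hl : L (-x) = ∑ n ∈ Finset.range (N+2), (-1:ℝ)^(N+1-n) * ((N+1).choose n) * (x+n)^(N+1) := by
        rw [hL]
        apply Finset.sum_congr rfl
        intro n hn
        rw [Finset.mem_range] at hn
        have h9 : -x - (n:ℝ) = -(x + n) := by ring
        have h10 : (x+(n:ℝ))^n * ((x+n)^(N+1-n)) = (x+n)^(N+1) := by
          rw [← pow_add]
          congr 1
          omega
        rw [h9, neg_pow, ← h10]
        ring
      have hfd := fd (N+1) (N+1) le_rfl x
      norm_num at hfd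
      have hr : R (-x) = ((N+1).factorial : ℝ) := by
        rw [hR]
        simp only [add_neg_cancel]
        rw [Finset.sum_range_succ]
        have h11 : ∀ j ∈ Finset.range (N+1), ((N+1).choose j : ℝ) * (j.factorial) * (0:ℝ)^(N+1-j) = 0 := by
          intro j hj
          rw [Finset.mem_range] at hj
          rw [zero_pow (by omega)]
          ring
        rw [Finset.sum_congr rfl h11]
        simp
      rw [hr, hl, hfd]
    intro y
    have := hconst y
    rw [hanchor] at this
    linarith

lemma coeff_id (y : ℝ) (N : ℕ) :
    ∑ n ∈ Finset.range (N+1), (y+n)^n * (-(n:ℝ))^(N-n) / ((n.factorial : ℝ) * ((N-n).factorial : ℝ))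
      = ∑ k ∈ Finset.range (N+1), y^k / (k.factorial : ℝ) := by
  have h := cauchy_abel N y 0
  have hNf : ((N.factorial : ℝ)) ≠ 0 := by positivity
  -- rewrite LHS
  have hL : ∑ n ∈ Finset.range (N+1), (N.choose n : ℝ) * (y+n)^n * ((0:ℝ)-n)^(N-n)
      = (N.factorial : ℝ) * ∑ n ∈ Finset.range (N+1),
          (y+n)^n * (-(n:ℝ))^(N-n) / ((n.factorial : ℝ) * ((N-n).factorial : ℝ)) := by
    rw [Finset.mul_sum]
    apply Finset.sum_congr rfl
    intro n hn
    rw [Finset.mem_range] at hn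
    have hc := Nat.choose_mul_factorial_mul_factorial (show n ≤ N by omega)
    have hc' : ((N.choose n : ℕ) : ℝ) * (n.factorial : ℝ) * ((N-n).factorial : ℝ) = (N.factorial : ℝ) := by
      exact_mod_cast congrArg (fun t : ℕ => (t : ℝ)) hc
    have h0 : (0:ℝ) - n = -(n:ℝ) := by ring
    rw [h0]
    have hn1 : ((n.factorial : ℝ)) ≠ 0 := by positivity
    have hn2 : (((N-n).factorial : ℝ)) ≠ 0 := by positivity
    field_simp
    linear_combination ((y+n)^n * (-(n:ℝ))^(N-n)) * hc'
  have hR : ∑ j ∈ Finset.range (N+1), (N.choose j : ℝ) * (j.factorial) * (y+0)^(N-j)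
      = (N.factorial : ℝ) * ∑ k ∈ Finset.range (N+1), y^k / (k.factorial : ℝ) := by
    have hrefl := Finset.sum_range_reflect
      (fun j => (N.choose j : ℝ) * (j.factorial) * (y+0)^(N-j)) (N+1)
    rw [← hrefl, Finset.mul_sum]
    apply Finset.sum_congr rfl
    intro k hk
    rw [Finset.mem_range] at hk
    have hk' : k ≤ N := by omega
    have e1 : N + 1 - 1 - k = N - k := by omega
    rw [e1]
    have e2 : N - (N - k) = k := by omega
    rw [e2, Nat.choose_symm hk']
    have hc := Nat.choose_mul_factorial_mul_factorial hk'
    have hc' : ((N.choose k : ℕ) : ℝ) * (k.factorial : ℝ) * ((N-k).factorial : ℝ) = (N.factorial : ℝ) := by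
      exact_mod_cast congrArg (fun t : ℕ => (t : ℝ)) hc
    have hk1 : ((k.factorial : ℝ)) ≠ 0 := by positivity
    rw [add_zero]
    field_simp
    linear_combination (y^k) * hc'
  rw [hL, hR] at h
  exact mul_left_cancel₀ hNf h

lemma exp_ge_pow (n : ℕ) (x : ℝ) (hx : 0 ≤ x) : x^n / n.factorial ≤ Real.exp x := by
  have h := Real.sum_le_exp_of_nonneg hx (n+1)
  refine le_trans ?_ h
  apply Finset.single_le_sum (f := fun i => x^i / (i.factorial : ℝ)) ?_ (Finset.self_mem_range_succ n)
  intro i hi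
  positivity

lemma coeff_bound (y : ℝ) (n : ℕ) :
    |(y+n)^n / n.factorial| ≤ Real.exp |y| * (Real.exp 1)^n := by
  rcases Nat.eq_zero_or_pos n with h0 | hpos
  · subst h0
    simp [Real.one_le_exp]
  · have h1 : |(y+(n:ℝ))^n / n.factorial| = |y+(n:ℝ)|^n / n.factorial := by
      rw [abs_div, abs_pow, Nat.abs_cast]
    rw [h1]
    have hn0 : (0:ℝ) < n := by exact_mod_cast hpos
    have h2 : |y+(n:ℝ)| ≤ |y| + n := by
      calc |y + (n:ℝ)| ≤ |y| + |(n:ℝ)| := abs_add_le _ _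
      _ = |y| + n := by rw [Nat.abs_cast]
    have h3 : |y| + (n:ℝ) ≤ n * Real.exp (|y|/n) := by
      have h := Real.add_one_le_exp (|y|/(n:ℝ))
      have hcan : |y|/(n:ℝ) * n = |y| := div_mul_cancel₀ _ hn0.ne'
      nlinarith
    have h4 : |y+(n:ℝ)|^n ≤ (n:ℝ)^n * Real.exp |y| := by
      calc |y+(n:ℝ)|^n ≤ ((n:ℝ) * Real.exp (|y|/n))^n :=
            pow_le_pow_left₀ (abs_nonneg _) (h2.trans h3) n
      _ = (n:ℝ)^n * Real.exp |y| := by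
            rw [mul_pow, ← Real.exp_nat_mul]
            congr 2
            field_simp
    have h5 : (n:ℝ)^n / n.factorial ≤ (Real.exp 1)^n := by
      have h := exp_ge_pow n n (by positivity)
      have h2 : Real.exp (n:ℝ) = (Real.exp 1)^n := by
        rw [← Real.exp_nat_mul, mul_one]
      rwa [h2] at h
    have hf : (0:ℝ) ≤ n.factorial := by positivity
    calc |y+(n:ℝ)|^n / n.factorial ≤ ((n:ℝ)^n * Real.exp |y|) / n.factorial := by
          apply div_le_div_of_nonneg_right h4 hf
    _ = Real.exp |y| * ((n:ℝ)^n / n.factorial) := by ring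
    _ ≤ Real.exp |y| * (Real.exp 1)^n := by
          apply mul_le_mul_of_nonneg_left h5 (Real.exp_pos _).le

lemma summable_bound (y : ℝ) {r : ℝ} (hr0 : 0 ≤ r) (hr : r * Real.exp 1 < 1) :
    Summable (fun n : ℕ => |(y+n)^n / n.factorial| * r^n) := by
  have hg : Summable (fun n : ℕ => Real.exp |y| * (r * Real.exp 1)^n) :=
    (summable_geometric_of_lt_one (by positivity) hr).mul_left _
  have hle : ∀ n : ℕ, |(y+n)^n / n.factorial| * r^n ≤ Real.exp |y| * (r * Real.exp 1)^n := by
    intro n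
    calc |(y+n)^n / n.factorial| * r^n ≤ (Real.exp |y| * (Real.exp 1)^n) * r^n :=
          mul_le_mul_of_nonneg_right (coeff_bound y n) (by positivity)
    _ = Real.exp |y| * (r * Real.exp 1)^n := by rw [mul_pow]; ring
  exact Summable.of_nonneg_of_le (fun n => by positivity) hle hg

lemma real_exp_tsum (x : ℝ) : Real.exp x = ∑' n : ℕ, x^n / n.factorial := by
  rw [Real.exp_eq_exp_ℝ, NormedSpace.exp_eq_tsum_div]

lemma small_t (y : ℝ) (t : ℝ) (ht0 : 0 < t) (ht : t < 1/10) :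
    ∑' n : ℕ, (y+n)^n / (n.factorial : ℝ) * (t * Real.exp (-t))^n
      = Real.exp (y*t) / (1-t) := by
  set a : ℕ × ℕ → ℝ := fun p =>
    ((y+p.1)^p.1 * t^p.1 / p.1.factorial) * ((-(p.1:ℝ)*t)^p.2 / p.2.factorial) with ha
  have hq : t * Real.exp t * Real.exp 1 < 1 := by
    have h1 : Real.exp t < Real.exp (1/10) := Real.exp_lt_exp.mpr ht
    have h2 : Real.exp (1/10) < 10/9 := by
      have h3 := Real.add_one_lt_exp (x := -(1/10)) (by norm_num)
      have h4 : Real.exp (1/10) = (Real.exp (-(1/10)))⁻¹ := by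
        rw [← Real.exp_neg]; norm_num
      rw [h4]
      rw [inv_lt_iff_one_lt_mul₀ (Real.exp_pos _)] -- maybe wrong name
      nlinarith [h3]
    have h5 : Real.exp 1 < 2.7182818286 := Real.exp_one_lt_d9
    have step1 : t * Real.exp t < (1/10)*(10/9) :=
      mul_lt_mul'' ht (h1.trans h2) ht0.le (Real.exp_pos t).le
    have step2 : (t * Real.exp t) * Real.exp 1 < ((1/10)*(10/9)) * 2.7182818286 :=
      mul_lt_mul'' step1 h5 (by positivity) (Real.exp_pos 1).le
    calc t * Real.exp t * Real.exp 1 < ((1/10)*(10/9)) * 2.7182818286 := step2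
    _ < 1 := by norm_num
  -- row descriptions
  have hrow : ∀ n : ℕ, (fun m => |a (n, m)|)
      = (fun m => (|(y+n)^n * t^n / n.factorial|) * (((n:ℝ)*t)^m / m.factorial)) := by
    intro n
    have habsneg : |(-(n:ℝ)*t)| = (n:ℝ)*t := by
      rw [abs_mul, abs_neg, Nat.abs_cast, abs_of_pos ht0]
    funext m
    simp only [ha]
    rw [abs_mul]
    congr 1
    rw [abs_div, abs_pow, habsneg, Nat.abs_cast]
  have habs_row : ∀ n : ℕ, Summable (fun m => |a (n, m)|) := by
    intro n
    rw [hrow n]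
    exact (Real.summable_pow_div_factorial _).mul_left _
  have hrowsum : ∀ n : ℕ, ∑' m, |a (n, m)|
      = |(y+n)^n * t^n / n.factorial| * Real.exp ((n:ℝ)*t) := by
    intro n
    rw [hrow n, tsum_mul_left]
    congr 1
    exact (real_exp_tsum _).symm
  have hcolsummable : Summable (fun n => ∑' m, |a (n, m)|) := by
    have hled : ∀ n : ℕ, ∑' m, |a (n, m)| ≤ Real.exp |y| * (t * Real.exp t * Real.exp 1)^n := by
      intro n
      rw [hrowsum n]
      have e1 : |(y+n)^n * t^n / (n.factorial : ℝ)| = |(y+n)^n / n.factorial| * t^n := by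
        rw [show (y+(n:ℝ))^n * t^n / (n.factorial:ℝ) = ((y+n)^n / n.factorial) * t^n by ring]
        rw [abs_mul, abs_pow, abs_of_pos ht0]
      rw [e1, Real.exp_nat_mul]
      calc |(y+n)^n / (n.factorial:ℝ)| * t^n * (Real.exp t)^n
          ≤ (Real.exp |y| * (Real.exp 1)^n) * t^n * (Real.exp t)^n := by
            apply mul_le_mul_of_nonneg_right
              (mul_le_mul_of_nonneg_right (coeff_bound y n) (by positivity)) (by positivity)
      _ = Real.exp |y| * (t * Real.exp t * Real.exp 1)^n := by
            rw [mul_pow, mul_pow]; ring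
    apply Summable.of_nonneg_of_le (fun n => tsum_nonneg (fun m => abs_nonneg _)) hled
    exact (summable_geometric_of_lt_one (by positivity) hq).mul_left _
  have habs : Summable (fun p : ℕ × ℕ => |a p|) := by
    rw [summable_prod_of_nonneg (fun p => abs_nonneg _)]
    exact ⟨habs_row, hcolsummable⟩
  have hsum : Summable a := Summable.of_abs habs
  -- term rewriting
  have hterm : ∀ n : ℕ, (y+n)^n / (n.factorial : ℝ) * (t * Real.exp (-t))^n
      = ∑' m, a (n, m) := by
    intro n
    have e2 : ∑' m : ℕ, a (n, m)
        = ((y+n)^n * t^n / n.factorial) * ∑' m : ℕ, ((-(n:ℝ)*t)^m / m.factorial) := by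
      rw [← tsum_mul_left]
    rw [e2, ← real_exp_tsum]
    rw [mul_pow, ← Real.exp_nat_mul]
    rw [show (n:ℝ) * (-t) = -(n:ℝ)*t by ring]
    ring
  have hdiag : ∀ N : ℕ, ∑ kl ∈ Finset.HasAntidiagonal.antidiagonal N, a kl
      = t^N * ∑ k ∈ Finset.range (N+1), y^k / (k.factorial : ℝ) := by
    intro N
    rw [Finset.Nat.sum_antidiagonal_eq_sum_range_succ_mk]
    rw [← coeff_id y N, Finset.mul_sum]
    apply Finset.sum_congr rfl
    intro k hk
    rw [Finset.mem_range] at hk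
    simp only [ha]
    have e3 : t^k * t^(N-k) = t^N := by
      rw [← pow_add]; congr 1; omega
    rw [mul_pow]
    field_simp
    linear_combination ((y+k)^k * (-(k:ℝ))^(N-k)) * e3
  -- Cauchy product for RHS
  have hf : Summable (fun k : ℕ => ‖(y*t)^k / (k.factorial : ℝ)‖) := by
    have : (fun k : ℕ => ‖(y*t)^k / (k.factorial : ℝ)‖) = fun k => |y*t|^k / k.factorial := by
      funext k
      rw [Real.norm_eq_abs, abs_div, abs_pow, Nat.abs_cast]
    rw [this]
    exact Real.summable_pow_div_factorial _
  have hg : Summable (fun m : ℕ => ‖t^m‖) := by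
    have : (fun m : ℕ => ‖t^m‖) = fun m => t^m := by
      funext m
      rw [Real.norm_eq_abs, abs_pow, abs_of_pos ht0]
    rw [this]
    exact summable_geometric_of_lt_one ht0.le (by linarith)
  have hcauchy := tsum_mul_tsum_eq_tsum_sum_antidiagonal_of_summable_norm hf hg
  have hexp : ∑' k : ℕ, (y*t)^k / (k.factorial : ℝ) = Real.exp (y*t) := (real_exp_tsum _).symm
  have hgeo : ∑' m : ℕ, t^m = (1-t)⁻¹ := tsum_geometric_of_lt_one ht0.le (by linarith)
  rw [hexp, hgeo] at hcauchy
  have hrhs : ∀ N : ℕ, ∑ kl ∈ Finset.HasAntidiagonal.antidiagonal N, (y*t)^kl.1 / (kl.1.factorial : ℝ) * t^kl.2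
      = t^N * ∑ k ∈ Finset.range (N+1), y^k / (k.factorial : ℝ) := by
    intro N
    rw [Finset.Nat.sum_antidiagonal_eq_sum_range_succ_mk, Finset.mul_sum]
    apply Finset.sum_congr rfl
    intro k hk
    rw [Finset.mem_range] at hk
    have e3 : t^k * t^(N-k) = t^N := by
      rw [← pow_add]; congr 1; omega
    rw [mul_pow]
    field_simp
    linear_combination (y^k) * e3
  calc ∑' n : ℕ, (y+n)^n / (n.factorial : ℝ) * (t * Real.exp (-t))^n
      = ∑' n : ℕ, ∑' m : ℕ, a (n, m) := tsum_congr hterm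
  _ = ∑' p : ℕ × ℕ, a p := (Summable.tsum_prod' hsum (fun n => Summable.of_abs (habs_row n))).symm
  _ = ∑' x : (Σ N : ℕ, Finset.HasAntidiagonal.antidiagonal N), a x.2 :=
      (Finset.HasAntidiagonal.sigmaAntidiagonalEquivProd.tsum_eq a).symm
  _ = ∑' N : ℕ, ∑' c : Finset.HasAntidiagonal.antidiagonal N, a c :=
      Summable.tsum_sigma' (fun N => (hasSum_fintype _).summable)
        (Finset.HasAntidiagonal.sigmaAntidiagonalEquivProd.summable_iff.mpr hsum)
  _ = ∑' N : ℕ, ∑ kl ∈ Finset.HasAntidiagonal.antidiagonal N, a kl := by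
      apply tsum_congr
      intro N
      exact Finset.tsum_subtype _ _
  _ = ∑' N : ℕ, t^N * ∑ k ∈ Finset.range (N+1), y^k / (k.factorial : ℝ) := tsum_congr hdiag
  _ = ∑' N : ℕ, ∑ kl ∈ Finset.HasAntidiagonal.antidiagonal N, (y*t)^kl.1 / (kl.1.factorial : ℝ) * t^kl.2 :=
      (tsum_congr hrhs).symm
  _ = Real.exp (y*t) * (1-t)⁻¹ := hcauchy.symm
  _ = Real.exp (y*t) / (1-t) := (div_eq_mul_inv _ _).symm

/-- The identity `G_0(t,y) = ∑_{n=0}^∞ (y+n)^n (t e^{-t})^n / n! = e^{yt}/(1-t)`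
for `0 ≤ t < 1` and `y` such that `y + n ≠ 0` for all naturals `n`. -/
theorem kolberg_G_zero (y : ℝ) (hyn : ∀ n : ℕ, y + (n : ℝ) ≠ 0)
    (t : ℝ) (ht0 : 0 ≤ t) (ht1 : t < 1) :
    ∑' n : ℕ, (y + n) ^ n * (t * Real.exp (-t)) ^ n / (Nat.factorial n : ℝ)
      = Real.exp (y * t) / (1 - t) := by
  classical
  set c : ℕ → ℝ := fun n => (y+n)^n / n.factorial with hc
  set p : FormalMultilinearSeries ℝ ℝ ℝ := FormalMultilinearSeries.ofScalars ℝ c with hp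
  -- radius bound
  have hradius : ∀ v : ℝ, |v| * Real.exp 1 < 1 → (‖v‖₊ : ENNReal) < p.radius := by
    intro v hv
    set r : ℝ := (|v| + (Real.exp 1)⁻¹) / 2 with hr
    have hepos := Real.exp_pos 1
    have hv1 : |v| < (Real.exp 1)⁻¹ := by
      rw [inv_eq_one_div, lt_div_iff₀ hepos]
      linarith
    have hvr : |v| < r := by rw [hr]; linarith
    have hr0 : 0 ≤ r := by positivity
    have hre : r * Real.exp 1 < 1 := by
      rw [hr]
      have : (Real.exp 1)⁻¹ * Real.exp 1 = 1 := inv_mul_cancel₀ hepos.ne'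
      nlinarith
    have hsum : Summable (fun n : ℕ => ‖p n‖ * (r.toNNReal : ℝ)^n) := by
      have hcoe : (r.toNNReal : ℝ) = r := Real.coe_toNNReal r hr0
      rw [hcoe]
      have heq : (fun n : ℕ => ‖p n‖ * r^n) = fun n : ℕ => |c n| * r^n := by
        funext n
        rw [hp, FormalMultilinearSeries.ofScalars_norm, Real.norm_eq_abs]
      rw [heq]
      exact summable_bound y hr0 hre
    have hle := p.le_radius_of_summable_norm hsum
    refine lt_of_lt_of_le ?_ hle
    rw [ENNReal.coe_lt_coe]
    have h2 : (‖v‖₊ : ℝ) < (r.toNNReal : ℝ) := by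
      rw [coe_nnnorm, Real.norm_eq_abs, Real.coe_toNNReal _ hr0]
      exact hvr
    exact NNReal.coe_lt_coe.mp h2
  have hrad0 : 0 < p.radius := by
    have h := hradius 0 (by simp)
    exact lt_of_le_of_lt zero_le h
  have hball := p.hasFPowerSeriesOnBall hrad0
  have hpsum_analytic : ∀ v : ℝ, |v| * Real.exp 1 < 1 → AnalyticAt ℝ p.sum v := by
    intro v hv
    apply hball.analyticAt_of_mem
    rw [EMetric.mem_ball, edist_zero_right]
    exact hradius v hv
  have hexp19 : Real.exp (1/10) < 10/9 := by
    have h3 := Real.add_one_lt_exp (x := -(1/10)) (by norm_num)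
    have h4 : Real.exp (1/10) = (Real.exp (-(1/10)))⁻¹ := by
      rw [← Real.exp_neg]; norm_num
    rw [h4, inv_eq_one_div, div_lt_iff₀ (Real.exp_pos _)]
    nlinarith
  have hu_small : ∀ s ∈ Set.Ioo (-(1/10):ℝ) 1, |s * Real.exp (-s)| * Real.exp 1 < 1 := by
    intro s hs
    obtain ⟨hs1, hs2⟩ := hs
    rcases le_or_gt s 0 with hneg | hpos
    · have habs : |s * Real.exp (-s)| = |s| * Real.exp (-s) := by
        rw [abs_mul, abs_of_pos (Real.exp_pos _)]
      have h5 : |s| < 1/10 := by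
        rw [abs_of_nonpos hneg]; linarith
      have h6 : Real.exp (-s) < 10/9 := by
        refine lt_of_le_of_lt ?_ hexp19
        exact Real.exp_le_exp.mpr (by linarith)
      have step1 : |s| * Real.exp (-s) < (1/10) * (10/9) :=
        mul_lt_mul'' h5 h6 (abs_nonneg _) (Real.exp_pos _).le
      have step2 : (|s| * Real.exp (-s)) * Real.exp 1 < ((1/10)*(10/9)) * 2.7182818286 :=
        mul_lt_mul'' step1 Real.exp_one_lt_d9 (by positivity) (Real.exp_pos 1).le
      rw [habs]
      calc |s| * Real.exp (-s) * Real.exp 1 < ((1/10)*(10/9)) * 2.7182818286 := step2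
      _ < 1 := by norm_num
    · have habs : |s * Real.exp (-s)| = s * Real.exp (-s) := by
        rw [abs_of_pos (by positivity)]
      have h1 : s < Real.exp (s-1) := by
        nth_rewrite 1 [← Real.exp_log hpos]
        exact Real.exp_lt_exp.mpr (Real.log_lt_sub_one_of_pos hpos (by linarith))
      rw [habs]
      calc s * Real.exp (-s) * Real.exp 1 = s * Real.exp (1-s) := by
            rw [mul_assoc, ← Real.exp_add]
            ring_nf
      _ < Real.exp (s-1) * Real.exp (1-s) := mul_lt_mul_of_pos_right h1 (Real.exp_pos _)
      _ = 1 := by rw [← Real.exp_add]; norm_num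
  set U : Set ℝ := Set.Ioo (-(1/10):ℝ) 1 with hU
  have hg1 : AnalyticOnNhd ℝ (fun s => p.sum (s * Real.exp (-s))) U := by
    intro s hs
    have hu_an : AnalyticAt ℝ (fun s : ℝ => s * Real.exp (-s)) s :=
      (analyticAt_id).mul (analyticAt_rexp.comp (analyticAt_id).neg)
    have hcomp := AnalyticAt.comp (x := s) (f := fun s : ℝ => s * Real.exp (-s))
      (g := p.sum) (hpsum_analytic _ (hu_small s hs)) hu_an
    exact hcomp
  have hg2 : AnalyticOnNhd ℝ (fun s => Real.exp (y*s) / (1-s)) U := by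
    intro s hs
    apply AnalyticAt.div
    · exact analyticAt_rexp.comp (analyticAt_const.mul analyticAt_id)
    · exact analyticAt_const.sub analyticAt_id
    · have := hs.2
      intro hcon
      have : (1:ℝ) - s > 0 := by linarith [hs.2]
      linarith [hcon ▸ this]
  have hpsum_eq : ∀ v : ℝ, p.sum v = ∑' n : ℕ, c n * v^n := by
    intro v
    have h := FormalMultilinearSeries.ofScalars_sum_eq c v
    rw [hp]
    change FormalMultilinearSeries.ofScalarsSum c v = _
    rw [h]
    simp [smul_eq_mul]
  have hev : (fun s => p.sum (s * Real.exp (-s))) =ᶠ[nhds (1/20 : ℝ)]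
      (fun s => Real.exp (y*s) / (1-s)) := by
    have hnb : Set.Ioo (0:ℝ) (1/10) ∈ nhds (1/20 : ℝ) :=
      Ioo_mem_nhds (by norm_num) (by norm_num)
    refine Filter.eventuallyEq_of_mem hnb ?_
    intro s hs
    show p.sum (s * Real.exp (-s)) = Real.exp (y*s) / (1-s)
    rw [hpsum_eq]
    simp only [hc]
    exact small_t y s hs.1 hs.2
  have heqon := hg1.eqOn_of_preconnected_of_eventuallyEq hg2 isPreconnected_Ioo
    (show (1/20:ℝ) ∈ U by rw [hU]; constructor <;> norm_num) hev
  have htU : t ∈ U := by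
    rw [hU]; exact ⟨by linarith, ht1⟩
  have hfin := heqon htU
  calc ∑' n : ℕ, (y + n) ^ n * (t * Real.exp (-t)) ^ n / (Nat.factorial n : ℝ)
      = ∑' n : ℕ, c n * (t * Real.exp (-t))^n := by
        apply tsum_congr
        intro n
        rw [hc]
        ring
  _ = p.sum (t * Real.exp (-t)) := (hpsum_eq _).symm
  _ = Real.exp (y * t) / (1 - t) := hfin
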